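/- Let d_w > 0, d > 0, set d_s = 2d/d_w, and let α₁, α₂, β ∈ (0, d_w), ā₁, ā₂ > 0, c₁ > 0, s₀ > 0. Then there exists a constant C > 0 such that the following holds: for every t > 0, every integer M ≥ 0, every probability measure η on (0,∞), and every function φ : (0,∞) → [0,∞) satisfying ∫_{(0,∞)} e^{−λu} dη(u) = e^{−tφ(λ)} for all λ > 0, with φ(λ) ≥ ā₁·λ^{α₁/d_w} for λ ∈ (0,1], φ(λ) ≥ ā₂·λ^{α₂/d_w} for λ ≥ 1, and φ(λ) ≤ c₁·λ^{β/d_w} for λ ∈ (0, s₀], one has ∫_{(0,∞)} max(u^{−d_s/2}, 2^{−Md}) dη(u) ≤ C·((t ∧ 2^{Mβ})^{−d/α₁} + (t ∧ 2^{Mβ})^{−d/α₂} + (t ∧ 2^{Mβ})^{−d/β}), where a ∧ b = min(a,b). -/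

import Mathlib

open MeasureTheory Set

lemma gamma_integrableOn {a r : ℝ} (ha : 0 < a) (hr : 0 < r) :
    IntegrableOn (fun x : ℝ => x ^ (a - 1) * Real.exp (-(r * x))) (Set.Ioi 0) := by
  have h0 : IntegrableOn (fun x : ℝ => Real.exp (-x) * x ^ (a - 1)) (Ioi 0) :=
    Real.GammaIntegral_convergent ha
  have h1 : IntegrableOn (fun x : ℝ => Real.exp (-(r * x)) * (r * x) ^ (a - 1)) (Ioi 0) := by
    have := (integrableOn_Ioi_comp_mul_left_iff
      (fun x : ℝ => Real.exp (-x) * x ^ (a - 1)) 0 hr).mpr (by simpa using h0)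
    simpa using this
  have h2 : IntegrableOn
      (fun x : ℝ => (r ^ (a-1))⁻¹ * (Real.exp (-(r * x)) * (r * x) ^ (a - 1))) (Ioi 0) :=
    h1.const_mul (r ^ (a - 1))⁻¹
  apply h2.congr_fun ?_ measurableSet_Ioi
  intro x hx
  have hx0 : (0:ℝ) < x := hx
  dsimp only
  rw [Real.mul_rpow hr.le hx0.le]
  have : r ^ (a-1) ≠ 0 := (Real.rpow_pos_of_pos hr _).ne'
  field_simp

lemma lint_gamma {a r : ℝ} (ha : 0 < a) (hr : 0 < r) :
    ∫⁻ x in Set.Ioi (0:ℝ), ENNReal.ofReal (x ^ (a - 1) * Real.exp (-(r * x)))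
      = ENNReal.ofReal ((1 / r) ^ a * Real.Gamma a) := by
  have hnn : 0 ≤ᵐ[volume.restrict (Set.Ioi (0:ℝ))]
      fun x : ℝ => x ^ (a - 1) * Real.exp (-(r * x)) := by
    rw [Filter.EventuallyLE, ae_restrict_iff' measurableSet_Ioi]
    filter_upwards with x hx
    have hx0 : (0:ℝ) < x := hx
    simp only [Pi.zero_apply]
    positivity
  rw [← ofReal_integral_eq_lintegral_ofReal (gamma_integrableOn ha hr) hnn,
    Real.integral_rpow_mul_exp_neg_mul_Ioi ha hr]

set_option maxHeartbeats 1000000 in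
lemma lint_gamma_rpow {a p r : ℝ} (ha : 0 < a) (hp : 0 < p) (hr : 0 < r) :
    ∫⁻ x in Set.Ioi (0:ℝ), ENNReal.ofReal (x ^ (a - 1) * Real.exp (-(r * x ^ p)))
      = ENNReal.ofReal ((1 / p) * ((1 / r) ^ (a / p) * Real.Gamma (a / p))) := by
  have haq : 0 < a / p := div_pos ha hp
  have key : ∀ x ∈ Set.Ioi (0:ℝ),
      (p * x ^ (p - 1)) • ((1/p) * ((x ^ p) ^ (a/p - 1) * Real.exp (-(r * x ^ p))))
        = x ^ (a - 1) * Real.exp (-(r * x ^ p)) := by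
    intro x hx
    have hx0 : (0:ℝ) < x := hx
    have h1 : (x ^ p) ^ (a/p - 1) = x ^ (a - p) := by
      rw [← Real.rpow_mul hx0.le]
      congr 1
      field_simp
    have h2 : x ^ (p-1) * x ^ (a-p) = x ^ (a-1) := by
      rw [← Real.rpow_add hx0]; congr 1; ring
    rw [smul_eq_mul, h1,
      show p * x ^ (p-1) * ((1/p) * (x ^ (a-p) * Real.exp (-(r * x ^ p))))
        = (p * (1/p)) * ((x ^ (p-1) * x ^ (a-p)) * Real.exp (-(r * x ^ p))) from by ring,
      h2, mul_one_div_cancel hp.ne', one_mul]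
  have hsub := integral_comp_rpow_Ioi_of_pos
      (g := fun y : ℝ => (1/p) * (y ^ (a/p - 1) * Real.exp (-(r * y)))) hp
  rw [setIntegral_congr_fun measurableSet_Ioi key] at hsub
  have hIg := gamma_integrableOn haq hr
  have h2 := (integrableOn_Ioi_comp_rpow_iff'
      (fun y : ℝ => y ^ (a/p - 1) * Real.exp (-(r * y))) hp.ne').mpr hIg
  have hInt : IntegrableOn (fun x : ℝ => x ^ (a-1) * Real.exp (-(r * x ^ p))) (Set.Ioi 0) := by
    apply h2.congr_fun ?_ measurableSet_Ioi
    intro x hx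
    have hx0 : (0:ℝ) < x := hx
    have h1 : (x ^ p) ^ (a/p - 1) = x ^ (a - p) := by
      rw [← Real.rpow_mul hx0.le]
      congr 1
      field_simp
    have h2' : x ^ (p-1) * x ^ (a-p) = x ^ (a-1) := by
      rw [← Real.rpow_add hx0]; congr 1; ring
    dsimp only
    rw [smul_eq_mul, h1, ← mul_assoc, h2']
  have hnn : 0 ≤ᵐ[volume.restrict (Set.Ioi (0:ℝ))]
      fun x : ℝ => x ^ (a - 1) * Real.exp (-(r * x ^ p)) := by
    rw [Filter.EventuallyLE, ae_restrict_iff' measurableSet_Ioi]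
    filter_upwards with x hx
    have hx0 : (0:ℝ) < x := hx
    simp only [Pi.zero_apply]
    positivity
  rw [← ofReal_integral_eq_lintegral_ofReal hInt hnn, hsub, integral_const_mul,
    Real.integral_rpow_mul_exp_neg_mul_Ioi haq hr]

set_option maxHeartbeats 1000000 in
lemma frac_moment (γ p₁ p₂ b₁ b₂ t : ℝ) (hγ : 0 < γ) (hp₁ : 0 < p₁) (hp₂ : 0 < p₂)
    (hb₁ : 0 < b₁) (hb₂ : 0 < b₂) (ht : 0 < t)
    (η : Measure ℝ) (hprob : IsProbabilityMeasure η)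
    (φ : ℝ → ℝ)
    (hlap : ∀ l : ℝ, 0 < l → ∫ u in Set.Ioi (0:ℝ), Real.exp (-l * u) ∂η
      = Real.exp (-(t * φ l)))
    (h1 : ∀ l : ℝ, 0 < l → l ≤ 1 → b₁ * l ^ p₁ ≤ φ l)
    (h2 : ∀ l : ℝ, 1 ≤ l → b₂ * l ^ p₂ ≤ φ l) :
    ∫⁻ u in Set.Ioi (0:ℝ), ENNReal.ofReal (u ^ (-γ)) ∂η
      ≤ ENNReal.ofReal (((1/p₁) * ((1/(t*b₁)) ^ (γ/p₁) * Real.Gamma (γ/p₁))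
          + (1/p₂) * ((1/(t*b₂)) ^ (γ/p₂) * Real.Gamma (γ/p₂))) / Real.Gamma γ) := by
  have hΓγ : 0 < Real.Gamma γ := Real.Gamma_pos_of_pos hγ
  set G := ENNReal.ofReal (Real.Gamma γ) with hGdef
  have hG0 : G ≠ 0 := by
    simp only [hGdef, ne_eq, ENNReal.ofReal_eq_zero, not_le]
    exact hΓγ
  have hGt : G ≠ ⊤ := ENNReal.ofReal_ne_top
  rw [ENNReal.ofReal_div_of_pos hΓγ, ← hGdef,
    ENNReal.le_div_iff_mul_le (Or.inl hG0) (Or.inl hGt)]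
  have hmeas : Measurable (fun q : ℝ × ℝ =>
      ENNReal.ofReal (q.2 ^ (γ - 1) * Real.exp (-(q.1 * q.2)))) := by
    apply Measurable.ennreal_ofReal
    exact (measurable_snd.pow measurable_const).mul
      ((measurable_fst.mul measurable_snd).neg.exp)
  calc (∫⁻ u in Set.Ioi (0:ℝ), ENNReal.ofReal (u ^ (-γ)) ∂η) * G
      = ∫⁻ u in Set.Ioi (0:ℝ), ENNReal.ofReal (u ^ (-γ)) * G ∂η := by
        rw [lintegral_mul_const' G _ hGt]
    _ = ∫⁻ u in Set.Ioi (0:ℝ),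
          (∫⁻ l in Set.Ioi (0:ℝ), ENNReal.ofReal (l ^ (γ - 1) * Real.exp (-(u * l)))) ∂η := by
        refine setLIntegral_congr_fun measurableSet_Ioi ?_
        intro u hu
        have hu0 : (0:ℝ) < u := hu
        dsimp only
        rw [lint_gamma hγ hu0, ENNReal.ofReal_mul (by positivity), hGdef]
        congr 2
        rw [one_div, Real.inv_rpow hu0.le, ← Real.rpow_neg hu0.le]
    _ = ∫⁻ l in Set.Ioi (0:ℝ),
          (∫⁻ u in Set.Ioi (0:ℝ), ENNReal.ofReal (l ^ (γ - 1) * Real.exp (-(u * l))) ∂η) :=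
        lintegral_lintegral_swap hmeas.aemeasurable
    _ = ∫⁻ l in Set.Ioi (0:ℝ),
          ENNReal.ofReal (l ^ (γ - 1)) * ENNReal.ofReal (Real.exp (-(t * φ l))) := by
        refine setLIntegral_congr_fun measurableSet_Ioi ?_
        intro l hl
        have hl0 : (0:ℝ) < l := hl
        have hsplit : ∀ u : ℝ, ENNReal.ofReal (l ^ (γ-1) * Real.exp (-(u * l)))
            = ENNReal.ofReal (l ^ (γ-1)) * ENNReal.ofReal (Real.exp (-(u * l))) :=
          fun u => ENNReal.ofReal_mul (by positivity)
        simp_rw [hsplit]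
        rw [lintegral_const_mul' _ _ ENNReal.ofReal_ne_top]
        congr 1
        have hint : Integrable (fun u : ℝ => Real.exp (-(u * l))) (η.restrict (Set.Ioi 0)) := by
          refine (integrable_const (1:ℝ)).mono' ?_ ?_
          · exact (Real.continuous_exp.comp
              (continuous_id.mul continuous_const).neg).aestronglyMeasurable
          · rw [ae_restrict_iff' measurableSet_Ioi]
            filter_upwards with u hu
            have hu0 : (0:ℝ) < u := hu
            rw [Real.norm_eq_abs, abs_of_pos (Real.exp_pos _), Real.exp_le_one_iff]
            nlinarith
        have hnn : 0 ≤ᵐ[η.restrict (Set.Ioi 0)] fun u : ℝ => Real.exp (-(u * l)) :=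
          ae_of_all _ fun u => (Real.exp_pos _).le
        rw [← ofReal_integral_eq_lintegral_ofReal hint hnn]
        congr 1
        rw [← hlap l hl0]
        exact integral_congr_ae (ae_of_all _ fun u => by dsimp only; rw [mul_comm, ← neg_mul])
    _ ≤ ∫⁻ l in Set.Ioi (0:ℝ),
          (ENNReal.ofReal (l ^ (γ-1) * Real.exp (-(t * b₁ * l ^ p₁)))
           + ENNReal.ofReal (l ^ (γ-1) * Real.exp (-(t * b₂ * l ^ p₂)))) := by
        refine setLIntegral_mono' measurableSet_Ioi ?_
        intro l hl
        have hl0 : (0:ℝ) < l := hl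
        rcases le_total l 1 with hle | hge
        · refine le_trans ?_ le_self_add
          rw [← ENNReal.ofReal_mul (by positivity)]
          apply ENNReal.ofReal_le_ofReal
          refine mul_le_mul_of_nonneg_left ?_ (by positivity)
          apply Real.exp_le_exp.mpr
          have : t * b₁ * l ^ p₁ ≤ t * φ l := by
            calc t * b₁ * l ^ p₁ = t * (b₁ * l ^ p₁) := by ring
              _ ≤ t * φ l := mul_le_mul_of_nonneg_left (h1 l hl0 hle) ht.le
          linarith
        · refine le_trans ?_ le_add_self
          rw [← ENNReal.ofReal_mul (by positivity)]
          apply ENNReal.ofReal_le_ofReal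
          refine mul_le_mul_of_nonneg_left ?_ (by positivity)
          apply Real.exp_le_exp.mpr
          have : t * b₂ * l ^ p₂ ≤ t * φ l := by
            calc t * b₂ * l ^ p₂ = t * (b₂ * l ^ p₂) := by ring
              _ ≤ t * φ l := mul_le_mul_of_nonneg_left (h2 l hge) ht.le
          linarith
    _ = ENNReal.ofReal ((1/p₁) * ((1/(t*b₁)) ^ (γ/p₁) * Real.Gamma (γ/p₁)))
          + ENNReal.ofReal ((1/p₂) * ((1/(t*b₂)) ^ (γ/p₂) * Real.Gamma (γ/p₂))) := by
        rw [lintegral_add_left (by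
          exact ((measurable_id.pow measurable_const).mul
            (((measurable_id.pow measurable_const).const_mul (t*b₁)).neg.exp)).ennreal_ofReal)]
        rw [lint_gamma_rpow hγ hp₁ (mul_pos ht hb₁), lint_gamma_rpow hγ hp₂ (mul_pos ht hb₂)]
    _ = ENNReal.ofReal ((1/p₁) * ((1/(t*b₁)) ^ (γ/p₁) * Real.Gamma (γ/p₁))
          + (1/p₂) * ((1/(t*b₂)) ^ (γ/p₂) * Real.Gamma (γ/p₂))) := by
        rw [← ENNReal.ofReal_add (by positivity) (by positivity)]

set_option maxHeartbeats 1000000 in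
/-- The analytic core of Lemma 4.2 of the paper: under the weak scaling bounds on the
Laplace exponent `φ`, the law `η` of the subordinator at time `t` satisfies
`∫ max(u^{-d_s/2}, 2^{-Md}) dη(u)
  ≤ C ((t ∧ 2^{Mβ})^{-d/α₁} + (t ∧ 2^{Mβ})^{-d/α₂} + (t ∧ 2^{Mβ})^{-d/β})`. -/
theorem stmt_13 (d_w d ds α₁ α₂ β a₁ a₂ c₁ s₀ : ℝ)
    (hdw : 0 < d_w) (hd : 0 < d) (hds : ds = 2 * d / d_w)
    (hα₁ : 0 < α₁ ∧ α₁ < d_w) (hα₂ : 0 < α₂ ∧ α₂ < d_w) (hβ : 0 < β ∧ β < d_w)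
    (ha₁ : 0 < a₁) (ha₂ : 0 < a₂) (hc₁ : 0 < c₁) (hs₀ : 0 < s₀) :
    ∃ C : ℝ, 0 < C ∧
      ∀ (t : ℝ), 0 < t → ∀ (M : ℕ),
      ∀ (η : Measure ℝ), IsProbabilityMeasure η → η (Set.Iic 0) = 0 →
      ∀ (φ : ℝ → ℝ), (∀ l : ℝ, 0 < l → 0 ≤ φ l) →
        (∀ l : ℝ, 0 < l →
          ∫ u in Set.Ioi (0:ℝ), Real.exp (-l * u) ∂η = Real.exp (-(t * φ l))) →
        (∀ l : ℝ, 0 < l → l ≤ 1 → a₁ * l ^ (α₁ / d_w) ≤ φ l) →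
        (∀ l : ℝ, 1 ≤ l → a₂ * l ^ (α₂ / d_w) ≤ φ l) →
        (∀ l : ℝ, 0 < l → l ≤ s₀ → φ l ≤ c₁ * l ^ (β / d_w)) →
        ∫⁻ u in Set.Ioi (0:ℝ),
            ENNReal.ofReal (max (u ^ (-(ds / 2))) ((2:ℝ) ^ (-((M:ℝ) * d)))) ∂η
          ≤ ENNReal.ofReal (C *
              ((min t ((2:ℝ) ^ ((M:ℝ) * β))) ^ (-(d / α₁)) +
               (min t ((2:ℝ) ^ ((M:ℝ) * β))) ^ (-(d / α₂)) +
               (min t ((2:ℝ) ^ ((M:ℝ) * β))) ^ (-(d / β)))) := by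

  obtain ⟨hα₁0, hα₁w⟩ := hα₁
  obtain ⟨hα₂0, hα₂w⟩ := hα₂
  obtain ⟨hβ0, hβw⟩ := hβ
  have hγ : 0 < d / d_w := div_pos hd hdw
  have hp₁ : 0 < α₁ / d_w := div_pos hα₁0 hdw
  have hp₂ : 0 < α₂ / d_w := div_pos hα₂0 hdw
  have hq₁ : (d/d_w) / (α₁/d_w) = d / α₁ := by
    field_simp
  have hq₂ : (d/d_w) / (α₂/d_w) = d / α₂ := by
    field_simp
  have hΓγ : 0 < Real.Gamma (d/d_w) := Real.Gamma_pos_of_pos hγ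
  have hΓ₁ : 0 < Real.Gamma (d/α₁) := Real.Gamma_pos_of_pos (div_pos hd hα₁0)
  have hΓ₂ : 0 < Real.Gamma (d/α₂) := Real.Gamma_pos_of_pos (div_pos hd hα₂0)
  refine ⟨(1/(α₁/d_w)) * ((1/a₁) ^ (d/α₁) * Real.Gamma (d/α₁)) / Real.Gamma (d/d_w)
      + (1/(α₂/d_w)) * ((1/a₂) ^ (d/α₂) * Real.Gamma (d/α₂)) / Real.Gamma (d/d_w) + 1,
    by positivity, ?_⟩
  intro t ht M η hprob hnull φ hφ0 hlap hs1 hs2 hup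
  haveI := hprob
  have h2Mβ : (0:ℝ) < (2:ℝ) ^ ((M:ℝ) * β) := Real.rpow_pos_of_pos two_pos _
  set m := min t ((2:ℝ) ^ ((M:ℝ) * β)) with hm
  have hm0 : 0 < m := lt_min ht h2Mβ
  have hmt : m ≤ t := min_le_left _ _
  have hsplit : ∫⁻ u in Set.Ioi (0:ℝ),
        ENNReal.ofReal (max (u ^ (-(ds / 2))) ((2:ℝ) ^ (-((M:ℝ) * d)))) ∂η
      ≤ (∫⁻ u in Set.Ioi (0:ℝ), ENNReal.ofReal (u ^ (-(d/d_w))) ∂η)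
        + ENNReal.ofReal ((2:ℝ) ^ (-((M:ℝ) * d))) := by
    have hb : ∀ u ∈ Set.Ioi (0:ℝ),
        ENNReal.ofReal (max (u ^ (-(ds / 2))) ((2:ℝ) ^ (-((M:ℝ) * d))))
          ≤ ENNReal.ofReal (u ^ (-(d/d_w))) + ENNReal.ofReal ((2:ℝ) ^ (-((M:ℝ) * d))) := by
      intro u hu
      have hu0 : (0:ℝ) < u := hu
      have hds2 : -(ds / 2) = -(d/d_w) := by rw [hds]; ring
      rw [hds2, ← ENNReal.ofReal_add (by positivity) (by positivity)]
      apply ENNReal.ofReal_le_ofReal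
      exact max_le (le_add_of_nonneg_right (by positivity))
        (le_add_of_nonneg_left (by positivity))
    calc ∫⁻ u in Set.Ioi (0:ℝ),
          ENNReal.ofReal (max (u ^ (-(ds / 2))) ((2:ℝ) ^ (-((M:ℝ) * d)))) ∂η
        ≤ ∫⁻ u in Set.Ioi (0:ℝ),
          (ENNReal.ofReal (u ^ (-(d/d_w))) + ENNReal.ofReal ((2:ℝ) ^ (-((M:ℝ) * d)))) ∂η :=
          setLIntegral_mono' measurableSet_Ioi hb
      _ = (∫⁻ u in Set.Ioi (0:ℝ), ENNReal.ofReal (u ^ (-(d/d_w))) ∂η)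
          + ENNReal.ofReal ((2:ℝ) ^ (-((M:ℝ) * d))) * η (Set.Ioi 0) := by
          rw [lintegral_add_right _ measurable_const, setLIntegral_const]
      _ ≤ (∫⁻ u in Set.Ioi (0:ℝ), ENNReal.ofReal (u ^ (-(d/d_w))) ∂η)
          + ENNReal.ofReal ((2:ℝ) ^ (-((M:ℝ) * d))) * 1 := by
          gcongr
          exact prob_le_one
      _ = _ := by rw [mul_one]
  have hI := frac_moment (d/d_w) (α₁/d_w) (α₂/d_w) a₁ a₂ t hγ hp₁ hp₂ ha₁ ha₂ ht
    η hprob φ hlap hs1 hs2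
  rw [hq₁, hq₂] at hI
  have hBase : ∀ q b : ℝ, 0 < q → 0 < b → (1/(t*b)) ^ q ≤ (1/b) ^ q * m ^ (-q) := by
    intro q b hq hb
    have h1 : (1/(t*b)) ^ q = (1/b) ^ q * t ^ (-q) := by
      rw [Real.rpow_neg ht.le, one_div, one_div, mul_inv,
        Real.mul_rpow (by positivity) (by positivity), Real.inv_rpow ht.le]
      ring
    rw [h1]
    refine mul_le_mul_of_nonneg_left ?_ (by positivity)
    rw [Real.rpow_neg ht.le, Real.rpow_neg hm0.le]
    exact inv_anti₀ (Real.rpow_pos_of_pos hm0 q)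
      (Real.rpow_le_rpow hm0.le hmt hq.le)
  have hA₁ : (1/(t*a₁)) ^ (d/α₁) ≤ (1/a₁) ^ (d/α₁) * m ^ (-(d/α₁)) :=
    hBase _ _ (div_pos hd hα₁0) ha₁
  have hA₂ : (1/(t*a₂)) ^ (d/α₂) ≤ (1/a₂) ^ (d/α₂) * m ^ (-(d/α₂)) :=
    hBase _ _ (div_pos hd hα₂0) ha₂
  have hB : (2:ℝ) ^ (-((M:ℝ) * d)) ≤ m ^ (-(d/β)) := by
    have h1 : ((2:ℝ) ^ ((M:ℝ) * β)) ^ (-(d/β)) = (2:ℝ) ^ (-((M:ℝ)*d)) := by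
      rw [← Real.rpow_mul (by norm_num : (0:ℝ) ≤ 2)]
      congr 1
      field_simp
    rw [← h1, Real.rpow_neg h2Mβ.le, Real.rpow_neg hm0.le]
    exact inv_anti₀ (Real.rpow_pos_of_pos hm0 _)
      (Real.rpow_le_rpow hm0.le (min_le_right _ _) (by positivity))
  have hfinal : ((1/(α₁/d_w)) * ((1/(t*a₁)) ^ (d/α₁) * Real.Gamma (d/α₁))
        + (1/(α₂/d_w)) * ((1/(t*a₂)) ^ (d/α₂) * Real.Gamma (d/α₂))) / Real.Gamma (d/d_w)
        + m ^ (-(d/β))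
      ≤ ((1/(α₁/d_w)) * ((1/a₁) ^ (d/α₁) * Real.Gamma (d/α₁)) / Real.Gamma (d/d_w)
          + (1/(α₂/d_w)) * ((1/a₂) ^ (d/α₂) * Real.Gamma (d/α₂)) / Real.Gamma (d/d_w) + 1)
        * (m ^ (-(d/α₁)) + m ^ (-(d/α₂)) + m ^ (-(d/β))) := by
    have hx : 0 ≤ m ^ (-(d/α₁)) := by positivity
    have hy : 0 ≤ m ^ (-(d/α₂)) := by positivity
    have hz : 0 ≤ m ^ (-(d/β)) := by positivity
    have hc₁' : (0:ℝ) ≤ (1/(α₁/d_w)) * Real.Gamma (d/α₁) / Real.Gamma (d/d_w) := by positivity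
    have hc₂' : (0:ℝ) ≤ (1/(α₂/d_w)) * Real.Gamma (d/α₂) / Real.Gamma (d/d_w) := by positivity
    have h₁ := mul_le_mul_of_nonneg_left hA₁ hc₁'
    have h₂ := mul_le_mul_of_nonneg_left hA₂ hc₂'
    have hK₁ : (0:ℝ) ≤ (1/(α₁/d_w)) * ((1/a₁) ^ (d/α₁) * Real.Gamma (d/α₁))
        / Real.Gamma (d/d_w) := by positivity
    have hK₂ : (0:ℝ) ≤ (1/(α₂/d_w)) * ((1/a₂) ^ (d/α₂) * Real.Gamma (d/α₂))
        / Real.Gamma (d/d_w) := by positivity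
    have e : ((1/(α₁/d_w)) * ((1/(t*a₁)) ^ (d/α₁) * Real.Gamma (d/α₁))
        + (1/(α₂/d_w)) * ((1/(t*a₂)) ^ (d/α₂) * Real.Gamma (d/α₂))) / Real.Gamma (d/d_w)
        = (1/(α₁/d_w)) * Real.Gamma (d/α₁) / Real.Gamma (d/d_w) * (1/(t*a₁)) ^ (d/α₁)
          + (1/(α₂/d_w)) * Real.Gamma (d/α₂) / Real.Gamma (d/d_w) * (1/(t*a₂)) ^ (d/α₂) := by
      ring
    rw [e]
    have step : (1/(α₁/d_w)) * Real.Gamma (d/α₁) / Real.Gamma (d/d_w) * (1/(t*a₁)) ^ (d/α₁)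
          + (1/(α₂/d_w)) * Real.Gamma (d/α₂) / Real.Gamma (d/d_w) * (1/(t*a₂)) ^ (d/α₂)
          + m ^ (-(d/β))
        ≤ ((1/(α₁/d_w)) * ((1/a₁) ^ (d/α₁) * Real.Gamma (d/α₁)) / Real.Gamma (d/d_w))
            * m ^ (-(d/α₁))
          + ((1/(α₂/d_w)) * ((1/a₂) ^ (d/α₂) * Real.Gamma (d/α₂)) / Real.Gamma (d/d_w))
            * m ^ (-(d/α₂))
          + m ^ (-(d/β)) := by
      have e₁ : ((1/(α₁/d_w)) * ((1/a₁) ^ (d/α₁) * Real.Gamma (d/α₁)) / Real.Gamma (d/d_w))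
            * m ^ (-(d/α₁))
          = (1/(α₁/d_w)) * Real.Gamma (d/α₁) / Real.Gamma (d/d_w)
            * ((1/a₁) ^ (d/α₁) * m ^ (-(d/α₁))) := by ring
      have e₂ : ((1/(α₂/d_w)) * ((1/a₂) ^ (d/α₂) * Real.Gamma (d/α₂)) / Real.Gamma (d/d_w))
            * m ^ (-(d/α₂))
          = (1/(α₂/d_w)) * Real.Gamma (d/α₂) / Real.Gamma (d/d_w)
            * ((1/a₂) ^ (d/α₂) * m ^ (-(d/α₂))) := by ring
      rw [e₁, e₂]
      exact add_le_add (add_le_add h₁ h₂) le_rfl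
    refine le_trans step ?_
    nlinarith [mul_nonneg hK₁ hy, mul_nonneg hK₁ hz, mul_nonneg hK₂ hx, mul_nonneg hK₂ hz,
      mul_nonneg hK₁ hx, mul_nonneg hK₂ hy]
  refine le_trans hsplit (le_trans (add_le_add hI (ENNReal.ofReal_le_ofReal hB)) ?_)
  rw [← ENNReal.ofReal_add (by positivity) (by positivity)]
  exact ENNReal.ofReal_le_ofReal hfinal
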